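/- Cardinality-bounded subteam formulas: let N = {p₁,…,p_n}, θ := ⋀_{1≤i≤n} =(p_i), and for l ≥ 1 let φ := Θ_X ∧ (θ ∨ ⋯ ∨ θ) with l disjuncts of θ. Then for every team Y over N: Y ⊨ φ if and only if Y ⊆ X and |Y| ≤ l. -/

import Mathlib

/-- PDL-formulas in negation normal form over variables `V`,
including dependence atoms `dep [a₁,…,a_k] b`; `dep [] p` is the
constancy atom `=(p)`. -/
inductive PDL (V : Type) : Type
  | pos : V → PDL V
  | neg : V → PDL V
  | bot : PDL V
  | top : PDL V
  | dep : List V → V → PDL V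
  | conj : PDL V → PDL V → PDL V
  | disj : PDL V → PDL V → PDL V

/-- Team semantics of PDL-formulas. -/
def PDL.tsat {V : Type} : PDL V → Set (V → Bool) → Prop
  | .pos p, X => ∀ v ∈ X, v p = true
  | .neg p, X => ∀ v ∈ X, v p = false
  | .bot, X => X = ∅
  | .top, _ => True
  | .dep as b, X => ∀ v ∈ X, ∀ v' ∈ X, (∀ a ∈ as, v a = v' a) → v b = v' b
  | .conj φ ψ, X => PDL.tsat φ X ∧ PDL.tsat ψ X
  | .disj φ ψ, X => ∃ Y Z : Set (V → Bool), X = Y ∪ Z ∧ PDL.tsat φ Y ∧ PDL.tsat ψ Z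

/-- Finite conjunction of a list of formulas (empty conjunction is `⊤`). -/
def PDL.bigConj {V : Type} (l : List (PDL V)) : PDL V := l.foldr .conj .top

/-- Finite disjunction of a list of formulas (empty disjunction is `⊥`). -/
def PDL.bigDisj {V : Type} (l : List (PDL V)) : PDL V := l.foldr .disj .bot

/-- The conjunction `p₁^{v(p₁)} ∧ ⋯ ∧ p_n^{v(p_n)}` describing the valuation
`v`, where `p^1 = p` and `p^0 = ¬p`. -/
noncomputable def PDL.lineOf {V : Type} [Fintype V] (v : V → Bool) : PDL V :=
  PDL.bigConj ((Finset.univ : Finset V).toList.map fun p =>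
    if v p then .pos p else .neg p)

/-- The formula `Θ_X := ⋁_{v ∈ X} (p₁^{v(p₁)} ∧ ⋯ ∧ p_n^{v(p_n)})`. -/
noncomputable def PDL.Theta {V : Type} [Fintype V] (X : Finset (V → Bool)) : PDL V :=
  PDL.bigDisj (X.toList.map PDL.lineOf)

/-- The formula `θ := ⋀_{p ∈ N} =(p)`. -/
noncomputable def PDL.theta (V : Type) [Fintype V] : PDL V :=
  PDL.bigConj ((Finset.univ : Finset V).toList.map fun p => .dep [] p)

/-- `disjCopies φ k` is the disjunction `φ ∨ ⋯ ∨ φ` with `k + 1` disjuncts. -/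
def PDL.disjCopies {V : Type} (φ : PDL V) : ℕ → PDL V
  | 0 => φ
  | k + 1 => .disj φ (PDL.disjCopies φ k)

lemma PDL.tsat_bigConj {V : Type} (l : List (PDL V)) (Y : Set (V → Bool)) :
    PDL.tsat (PDL.bigConj l) Y ↔ ∀ φ ∈ l, PDL.tsat φ Y := by
  induction l with
  | nil => simp [PDL.bigConj, PDL.tsat]
  | cons a l ih =>
    simp only [PDL.bigConj, List.foldr_cons, PDL.tsat, List.mem_cons]
    rw [show List.foldr PDL.conj PDL.top l = PDL.bigConj l from rfl, ih]
    constructor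
    · rintro ⟨h1, h2⟩ φ (rfl | hφ)
      · exact h1
      · exact h2 φ hφ
    · intro h
      exact ⟨h a (Or.inl rfl), fun φ hφ => h φ (Or.inr hφ)⟩

lemma PDL.tsat_lineOf {V : Type} [Fintype V] (v : V → Bool) (Y : Set (V → Bool)) :
    PDL.tsat (PDL.lineOf v) Y ↔ Y ⊆ {v} := by
  rw [PDL.lineOf, PDL.tsat_bigConj]
  constructor
  · intro h w hw
    have : ∀ p : V, w p = v p := by
      intro p
      have := h (if v p then .pos p else .neg p)
        (List.mem_map.2 ⟨p, by simp, rfl⟩)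
      by_cases hv : v p <;> simp [hv, PDL.tsat] at this <;> simp [this w hw, hv]
    exact funext this
  · intro h φ hφ
    obtain ⟨p, -, rfl⟩ := List.mem_map.1 hφ
    by_cases hv : v p <;> simp [hv, PDL.tsat] <;> intro w hw <;>
      · have := h hw; subst this; simpa using hv

lemma PDL.tsat_Theta {V : Type} [Fintype V] (X : Finset (V → Bool)) (Y : Set (V → Bool)) :
    PDL.tsat (PDL.Theta X) Y ↔ Y ⊆ (X : Set (V → Bool)) := by
  rw [PDL.Theta]
  have key : ∀ (L : List (V → Bool)) (Y : Set (V → Bool)),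
      PDL.tsat (PDL.bigDisj (L.map PDL.lineOf)) Y ↔ Y ⊆ {v | v ∈ L} := by
    intro L
    induction L with
    | nil =>
      intro Y
      simp [PDL.bigDisj, PDL.tsat, Set.subset_empty_iff]
    | cons a L ih =>
      intro Y
      simp only [List.map_cons, PDL.bigDisj, List.foldr_cons, PDL.tsat]
      rw [show List.foldr PDL.disj PDL.bot (L.map PDL.lineOf) =
        PDL.bigDisj (L.map PDL.lineOf) from rfl]
      constructor
      · rintro ⟨A, B, rfl, hA, hB⟩
        rw [PDL.tsat_lineOf] at hA
        rw [ih] at hB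
        intro w hw
        simp only [Set.mem_setOf_eq, List.mem_cons]
        rcases hw with hw | hw
        · exact Or.inl (hA hw)
        · exact Or.inr (hB hw)
      · intro h
        refine ⟨Y ∩ {a}, Y \ {a}, ?_, ?_, ?_⟩
        · ext w
          by_cases hw : w = a
          · simp [hw]
          · simp [hw]
        · rw [PDL.tsat_lineOf]; exact Set.inter_subset_right
        · rw [ih]
          rintro w ⟨hw, hwa⟩
          have := h hw
          simp only [Set.mem_setOf_eq, List.mem_cons] at this
          rcases this with h' | h'
          · exact absurd h' hwa
          · exact h'
  have heq : {v | v ∈ X.toList} = (X : Set (V → Bool)) := by ext w; simp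
  rw [key _ Y, heq]

lemma PDL.tsat_theta {V : Type} [Fintype V] (Y : Set (V → Bool)) :
    PDL.tsat (PDL.theta V) Y ↔ Y.Subsingleton := by
  rw [PDL.theta, PDL.tsat_bigConj]
  constructor
  · intro h v hv v' hv'
    refine funext fun p => ?_
    have := h (.dep [] p) (List.mem_map.2 ⟨p, by simp, rfl⟩)
    exact this v hv v' hv' (by simp)
  · intro h φ hφ
    obtain ⟨p, -, rfl⟩ := List.mem_map.1 hφ
    intro v hv v' hv' _
    rw [h hv hv']

lemma PDL.tsat_disjCopies_theta {V : Type} [Fintype V] (k : ℕ) (Y : Set (V → Bool)) :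
    PDL.tsat (PDL.disjCopies (PDL.theta V) k) Y ↔ Y.Finite ∧ Y.ncard ≤ k + 1 := by
  induction k generalizing Y with
  | zero =>
    rw [PDL.disjCopies, PDL.tsat_theta]
    constructor
    · intro h
      exact ⟨h.finite, by
        rcases Set.Subsingleton.eq_empty_or_singleton h with rfl | ⟨a, rfl⟩ <;> simp⟩
    · rintro ⟨hf, hc⟩
      exact (Set.ncard_le_one_iff_eq hf).1 hc |>.elim (fun h => h ▸ Set.subsingleton_empty)
        (fun ⟨a, h⟩ => h ▸ Set.subsingleton_singleton)
  | succ k ih =>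
    rw [PDL.disjCopies]
    constructor
    · rintro ⟨A, B, rfl, hA, hB⟩
      rw [PDL.tsat_theta] at hA
      rw [ih] at hB
      have hAf : A.Finite := hA.finite
      refine ⟨hAf.union hB.1, ?_⟩
      calc (A ∪ B).ncard ≤ A.ncard + B.ncard := Set.ncard_union_le A B
        _ ≤ 1 + (k + 1) := by
            refine Nat.add_le_add ?_ hB.2
            rcases Set.Subsingleton.eq_empty_or_singleton hA with rfl | ⟨a, rfl⟩ <;> simp
        _ = k + 1 + 1 := by ring
    · rintro ⟨hf, hc⟩
      rcases Set.eq_empty_or_nonempty Y with rfl | ⟨a, ha⟩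
      · exact ⟨∅, ∅, by simp, by rw [PDL.tsat_theta]; exact Set.subsingleton_empty,
          (ih ∅).2 ⟨Set.finite_empty, by simp⟩⟩
      · refine ⟨{a}, Y \ {a}, by simp [Set.union_comm, ha, Set.diff_union_of_subset], ?_, ?_⟩
        · rw [PDL.tsat_theta]; exact Set.subsingleton_singleton
        · rw [ih]
          refine ⟨hf.diff, ?_⟩
          have := Set.ncard_diff_singleton_of_mem ha
          omega

/-- Cardinality-bounded subteam formulas: for `l ≥ 1`, a team `Y` satisfies
`Θ_X ∧ (θ ∨ ⋯ ∨ θ)` (with `l` disjuncts of `θ`) iff `Y ⊆ X` and `|Y| ≤ l`. -/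
theorem cardinality_bounded_subteams {V : Type} [Fintype V] [Nonempty V]
    (l : ℕ) (hl : 1 ≤ l) (X : Finset (V → Bool)) (Y : Set (V → Bool)) :
    PDL.tsat (.conj (PDL.Theta X) (PDL.disjCopies (PDL.theta V) (l - 1))) Y ↔
      Y ⊆ (X : Set (V → Bool)) ∧ Y.ncard ≤ l := by
  have hl' : l - 1 + 1 = l := Nat.succ_pred_eq_of_pos hl
  rw [show PDL.tsat (.conj (PDL.Theta X) (PDL.disjCopies (PDL.theta V) (l - 1))) Y ↔
      PDL.tsat (PDL.Theta X) Y ∧ PDL.tsat (PDL.disjCopies (PDL.theta V) (l - 1)) Y from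
      Iff.rfl,
    PDL.tsat_Theta, PDL.tsat_disjCopies_theta, hl']
  constructor
  · rintro ⟨h1, -, h2⟩; exact ⟨h1, h2⟩
  · rintro ⟨h1, h2⟩
    exact ⟨h1, (X.finite_toSet.subset h1), h2⟩
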